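/- Let M be a q×q mixed invertible integer matrix. The set of formal power series solutions G_γ (one for each M-subgraph of ℕ^q, supported exactly on that subgraph) forms a basis of the space of formal power series solutions of the binomial system I(M); in particular, a formal power series solution of I(M) is determined by its coefficients on one chosen representative point of each M-subgraph. -/

import Mathlib

/-- For a `q×q` mixed invertible integer matrix `M`, the
solutions `G_γ` (one per `M`-subgraph) form a basis of the formal power
series solution space of `I(M)`: given a set `R` of representatives, one per
`M`-subgraph of `ℕ^q`, every assignment of values on `R` extends to a unique
formal power series solution of `I(M)`; in particular a solution is determined
by its coefficients at the representatives. -/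
theorem series_solutions_determined_by_representatives
    (q : ℕ) (hq : 1 ≤ q) (M : Matrix (Fin q) (Fin q) ℤ)
    (hdet : M.det ≠ 0)
    (hmix : ∀ k, (∃ i, 0 < M i k) ∧ (∃ i, M i k < 0))
    (R : Set (Fin q → ℕ)) :
    let pp : Fin q → Fin q → ℕ := fun k i => (M i k).toNat
    let mm : Fin q → Fin q → ℕ := fun k i => (-(M i k)).toNat
    let adj : (Fin q → ℕ) → (Fin q → ℕ) → Prop := fun u v =>
      ∃ k : Fin q, (∀ i, (v i : ℤ) = (u i : ℤ) + M i k) ∨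
                   (∀ i, (u i : ℤ) = (v i : ℤ) + M i k)
    let IsSol : ((Fin q → ℕ) → ℂ) → Prop := fun c =>
      ∀ (k : Fin q) (u : Fin q → ℕ),
        (∏ i, (((u i + pp k i).factorial / (u i).factorial : ℕ) : ℂ)) *
            c (fun i => u i + pp k i)
          = (∏ i, (((u i + mm k i).factorial / (u i).factorial : ℕ) : ℂ)) *
            c (fun i => u i + mm k i)
    (∀ u : Fin q → ℕ, ∃ r ∈ R, Relation.ReflTransGen adj r u) →
    (∀ r ∈ R, ∀ r' ∈ R, Relation.ReflTransGen adj r r' → r = r') →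
    ∀ g : (Fin q → ℕ) → ℂ,
      ∃! c : (Fin q → ℕ) → ℂ, IsSol c ∧ ∀ r ∈ R, c r = g r := by
  intro pp mm adj IsSol hsurj hinj g
  classical
  choose rep hrepR hrepReach using hsurj
  have hadj_symm : Symmetric adj := by
    rintro u v ⟨k, h⟩
    exact ⟨k, h.symm⟩
  have hrep_eq : ∀ u v, Relation.ReflTransGen adj u v → rep u = rep v := by
    intro u v huv
    refine hinj _ (hrepR u) _ (hrepR v) ?_
    exact ((hrepReach u).trans huv).trans
      ((@Relation.ReflTransGen.stdSymm _ _ ⟨hadj_symm⟩).symm _ _ (hrepReach v))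
  have hrep_fix : ∀ r ∈ R, rep r = r := fun r hr =>
    hinj _ (hrepR r) r hr (hrepReach r)
  set F : (Fin q → ℕ) → ℂ := fun u => ∏ i, ((u i).factorial : ℂ) with hF
  have hFne : ∀ u, F u ≠ 0 := by
    intro u
    refine Finset.prod_ne_zero_iff.2 fun i _ => ?_
    exact_mod_cast (Nat.factorial_ne_zero (u i))
  have prodfact : ∀ (u t : Fin q → ℕ),
      (∏ i, (((u i + t i).factorial / (u i).factorial : ℕ) : ℂ))
        = F (fun i => u i + t i) / F u := by
    intro u t
    rw [hF]
    rw [← Finset.prod_div_distrib]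
    refine Finset.prod_congr rfl fun i _ => ?_
    rw [Nat.cast_div (Nat.factorial_dvd_factorial (Nat.le_add_right _ _))]
    exact_mod_cast (Nat.factorial_ne_zero (u i))
  -- the two shifts of any u are adjacent
  have hshift : ∀ (k : Fin q) (u : Fin q → ℕ),
      adj (fun i => u i + mm k i) (fun i => u i + pp k i) := by
    intro k u
    refine ⟨k, Or.inl fun i => ?_⟩
    have hp : pp k i = (M i k).toNat := rfl
    have hm : mm k i = (-(M i k)).toNat := rfl
    push_cast
    rw [hp, hm]
    omega
  refine ⟨fun u => g (rep u) * F (rep u) / F u, ⟨?_, ?_⟩, ?_⟩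
  · -- IsSol
    intro k u
    dsimp only
    rw [prodfact u (pp k), prodfact u (mm k)]
    have hre : rep (fun i => u i + mm k i) = rep (fun i => u i + pp k i) :=
      hrep_eq _ _ (Relation.ReflTransGen.single (hshift k u))
    rw [← hre]
    have h1 := hFne (fun i => u i + mm k i)
    have h2 := hFne (fun i => u i + pp k i)
    have h3 := hFne u
    field_simp
  · -- boundary
    intro r hr
    dsimp only
    rw [hrep_fix r hr, mul_div_assoc, div_self (hFne r), mul_one]
  · -- uniqueness
    rintro c' ⟨hc'sol, hc'b⟩
    funext u
    have key : ∀ (k : Fin q) (v w : Fin q → ℕ),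
        (∀ i, (w i : ℤ) = (v i : ℤ) + M i k) → c' v * F v = c' w * F w := by
      intro k v w h
      set u0 : Fin q → ℕ := fun i => v i - mm k i with hu0
      have hv : v = fun i => u0 i + mm k i := by
        funext i
        have h1 := h i
        have hm : mm k i = (-(M i k)).toNat := rfl
        rw [hu0]
        simp only
        rw [hm] at *
        omega
      have hw : w = fun i => u0 i + pp k i := by
        funext i
        have h1 := h i
        have hm : mm k i = (-(M i k)).toNat := rfl
        have hp : pp k i = (M i k).toNat := rfl
        rw [hu0]
        simp only
        rw [hm, hp] at *
        omega
      have heq := hc'sol k u0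
      rw [prodfact u0 (pp k), prodfact u0 (mm k), ← hv, ← hw] at heq
      have h0 := hFne u0
      field_simp at heq
      linear_combination -heq
    have hH : ∀ v w, Relation.ReflTransGen adj v w → c' v * F v = c' w * F w := by
      intro v w hvw
      induction hvw with
      | refl => rfl
      | tail _ hstep ih =>
        rename_i b c _
        obtain ⟨k, h | h⟩ := hstep
        · exact ih.trans (key k b c h)
        · exact ih.trans (key k c b h).symm
    have h1 : c' (rep u) * F (rep u) = c' u * F u := hH _ _ (hrepReach u)
    have h2 : c' (rep u) = g (rep u) := hc'b _ (hrepR u)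
    have h3 := hFne u
    rw [h2] at h1
    field_simp
    linear_combination -h1
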